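/- Let m, k, δ ∈ ℕ with 0 < m < k, and let v : ℕ → {0,1} be an admissible attack signal, i.e., for every t ∈ ℕ the window {t, t+1, …, t+k−1} contains at least m indices s with v(s) = 1. Set T = (⌊δ/m⌋+1)(k−m) + δ. Then the set {s ∈ ℕ : s < T and v(s) = 1} contains at least δ elements. Equivalently: the number of consecutive time instants needed to accumulate δ instants at which the control input is not deactivated is at most (⌊δ/m⌋+1)(k−m) + δ. -/

import Mathlib

lemma count_split (v : ℕ → Bool) (a b : ℕ) (hab : a ≤ b) :
    ((Finset.range b).filter (fun s => v s = true)).card =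
      ((Finset.range a).filter (fun s => v s = true)).card +
      ((Finset.Ico a b).filter (fun s => v s = true)).card := by
  have h : Finset.range b = Finset.range a ∪ Finset.Ico a b := by
    rw [Finset.range_eq_Ico, Finset.range_eq_Ico]
    exact (Finset.Ico_union_Ico_eq_Ico (Nat.zero_le a) hab).symm
  rw [h, Finset.filter_union, Finset.card_union_of_disjoint]
  exact Finset.disjoint_filter_filter
    (by rw [Finset.range_eq_Ico]; exact Finset.Ico_disjoint_Ico_consecutive 0 a b)

lemma count_full (m k : ℕ) (v : ℕ → Bool)
    (hadm : ∀ t : ℕ, m ≤ ((Finset.Ico t (t + k)).filter (fun s => v s = true)).card) :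
    ∀ n : ℕ, n * m ≤ ((Finset.range (n * k)).filter (fun s => v s = true)).card := by
  intro n
  induction n with
  | zero => simp
  | succ n ih =>
    have h := count_split v (n * k) ((n + 1) * k) (by nlinarith)
    have h2 : (n + 1) * k = n * k + k := by ring
    rw [h2] at h ⊢
    have := hadm (n * k)
    have h3 : (n + 1) * m = n * m + m := by ring
    omega

theorem attack_signal_delta_closed_loop (m k δ : ℕ) (hm : 0 < m) (hmk : m < k)
    (v : ℕ → Bool)
    (hadm : ∀ t : ℕ, m ≤ ((Finset.Ico t (t + k)).filter (fun s => v s = true)).card) :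
    δ ≤ ((Finset.range ((δ / m + 1) * (k - m) + δ)).filter (fun s => v s = true)).card := by
  set n := δ / m with hn
  set r := δ % m with hr
  have hdiv : δ = n * m + r := by rw [hn, hr, Nat.mul_comm]; exact (Nat.div_add_mod δ m).symm
  have hrm : r < m := Nat.mod_lt _ hm
  set T := (n + 1) * (k - m) + δ with hT
  have hTk : T + (m - r) = (n + 1) * k := by
    have h4 : (n + 1) * k = (n + 1) * (k - m) + (n + 1) * m := by
      rw [← Nat.mul_add]; congr 1; omega
    have h3 : (n + 1) * m = n * m + m := by ring
    omega
  have hfull := count_full m k v hadm (n + 1)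
  have hsplit := count_split v T ((n + 1) * k) (by omega)
  have hico : ((Finset.Ico T ((n + 1) * k)).filter (fun s => v s = true)).card ≤ m - r := by
    calc _ ≤ (Finset.Ico T ((n + 1) * k)).card := Finset.card_filter_le _ _
    _ = m - r := by rw [Nat.card_Ico]; omega
  have : (n + 1) * m = n * m + m := by ring
  omega
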